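/- Let S be diagonal positive definite and p strictly outside the ellipsoid E = {y : yᵀS⁻²y ≤ 1} with all p_i ≥ 0. The point y* defined by y*_i = S_ii²p_i/(λ*+S_ii²), where λ* > 0 solves ∑S_ii²p_i²/(λ+S_ii²)² = 1, is the global minimizer of ‖p − y‖² over E. -/

import Mathlib

/-- For p strictly outside the axis-aligned ellipsoid with p_i ≥ 0,
the point y*_i = S_ii²p_i/(λ*+S_ii²), where λ* > 0 solves
∑ S_ii²p_i²/(λ+S_ii²)² = 1, is the global minimizer of ‖p − y‖² over the
ellipsoid. -/
theorem stmt5 (n : ℕ) (S p : Fin n → ℝ) (hS : ∀ i, 0 < S i) (hp : ∀ i, 0 ≤ p i)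
    (hout : 1 < ∑ i, (p i)^2 / (S i)^2)
    (l : ℝ) (hl : 0 < l)
    (hroot : ∑ i, (S i)^2 * (p i)^2 / (l + (S i)^2)^2 = 1)
    (y : Fin n → ℝ) (hy : ∀ i, y i = (S i)^2 * p i / (l + (S i)^2)) :
    (∑ i, (y i)^2 / (S i)^2 ≤ 1) ∧
    ∀ z : Fin n → ℝ, (∑ i, (z i)^2 / (S i)^2 ≤ 1) →
      ∑ i, (p i - y i)^2 ≤ ∑ i, (p i - z i)^2 := by
  have hls : ∀ i, (0:ℝ) < l + (S i)^2 := fun i => by have := hS i; positivity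
  have hfeas : ∑ i, (y i)^2 / (S i)^2 = 1 := by
    rw [← hroot]
    refine Finset.sum_congr rfl fun i _ => ?_
    rw [hy i]
    have h1 : (S i) ≠ 0 := (hS i).ne'
    have h2 : l + (S i)^2 ≠ 0 := (hls i).ne'
    field_simp
  refine ⟨le_of_eq hfeas, fun z hz => ?_⟩
  -- p i - y i = l * y i / (S i)^2
  have hpy : ∀ i, p i - y i = l * (y i / (S i)^2) := by
    intro i
    rw [hy i]
    have h1 : (S i) ≠ 0 := (hS i).ne'
    have h2 : l + (S i)^2 ≠ 0 := (hls i).ne'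
    field_simp
    ring
  -- Cauchy-Schwarz
  have hcs := Finset.sum_mul_sq_le_sq_mul_sq Finset.univ (fun i => y i / S i)
      (fun i => z i / S i)
  have hy2 : ∑ i, (y i / S i)^2 = 1 := by
    rw [← hfeas]; exact Finset.sum_congr rfl fun i _ => by rw [div_pow]
  have hz2 : ∑ i, (z i / S i)^2 ≤ 1 := by
    refine le_trans (le_of_eq ?_) hz
    exact Finset.sum_congr rfl fun i _ => by rw [div_pow]
  have ht : ∑ i, (y i / S i) * (z i / S i) ≤ 1 := by
    nlinarith [hcs, hy2, hz2, Finset.sum_nonneg (fun i (_ : i ∈ Finset.univ) =>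
      sq_nonneg (y i / S i))]
  have key : ∑ i, ((p i - z i)^2 - (p i - y i)^2)
      = ∑ i, (y i - z i)^2 + 2 * l * (∑ i, (y i / S i)^2 - ∑ i, (y i / S i) * (z i / S i)) := by
    rw [mul_sub, Finset.mul_sum, Finset.mul_sum, ← Finset.sum_sub_distrib, ← Finset.sum_add_distrib]
    refine Finset.sum_congr rfl fun i _ => ?_
    have h1 : (S i) ≠ 0 := (hS i).ne'
    have h := hpy i
    have hexp : p i = y i + l * (y i / (S i)^2) := by linarith
    rw [hexp]
    field_simp
    ring
  have hnn : 0 ≤ ∑ i, ((p i - z i)^2 - (p i - y i)^2) := by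
    rw [key, hy2]
    have h1 : 0 ≤ ∑ i, (y i - z i)^2 :=
      Finset.sum_nonneg fun i _ => sq_nonneg _
    nlinarith
  rw [Finset.sum_sub_distrib] at hnn
  linarith
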